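/- Let z₁, z₂ > 0 with z₁² + z₂² < 1, and set r and θ as the side-length ratio and larger interior angle of the parallelogram with vertices ±(1,0), ±(z₁,z₂). Then 1 − z₁² − z₂² + 2z₁ = 2(r² − 2r cos θ − 1)/(1 + r² − 2r cos θ) and (1 + z₁² − z₂²)² + (2 z₁ z₂)² = 4(r⁴ + 2r² cos(2θ) + 1)/(r² − 2r cos θ + 1)², so (1 − z₁² − z₂² + 2z₁)/√((1 + z₁² − z₂²)² + (2z₁z₂)²) = (r² − 2r cos θ − 1)/√((r² − 1)² + 4r² cos²θ). -/

import Mathlib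

set_option maxHeartbeats 1000000


open Real

theorem stmt_8 (r θ z₁ z₂ : ℝ) (hr : 1 < r) (hθ : θ ∈ Set.Ioo (π / 2) π)
    (hz₁ : z₁ = (r ^ 2 - 1) / (1 + r ^ 2 - 2 * r * cos θ))
    (hz₂ : z₂ = 2 * r * sin θ / (1 + r ^ 2 - 2 * r * cos θ)) :
    1 - z₁ ^ 2 - z₂ ^ 2 + 2 * z₁ =
      2 * (r ^ 2 - 2 * r * cos θ - 1) / (1 + r ^ 2 - 2 * r * cos θ) ∧
    (1 + z₁ ^ 2 - z₂ ^ 2) ^ 2 + (2 * z₁ * z₂) ^ 2 =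
      4 * (r ^ 4 + 2 * r ^ 2 * cos (2 * θ) + 1) / (r ^ 2 - 2 * r * cos θ + 1) ^ 2 ∧
    (1 - z₁ ^ 2 - z₂ ^ 2 + 2 * z₁) /
        Real.sqrt ((1 + z₁ ^ 2 - z₂ ^ 2) ^ 2 + (2 * z₁ * z₂) ^ 2) =
      (r ^ 2 - 2 * r * cos θ - 1) /
        Real.sqrt ((r ^ 2 - 1) ^ 2 + 4 * r ^ 2 * cos θ ^ 2) := by
  have hc : cos θ < 0 := Real.cos_neg_of_pi_div_two_lt_of_lt hθ.1
    (by linarith [hθ.2, Real.pi_pos])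
  have hD : 0 < 1 + r ^ 2 - 2 * r * cos θ := by nlinarith
  have hD' : (1 + r ^ 2 - 2 * r * cos θ) ≠ 0 := ne_of_gt hD
  have hD'' : (r ^ 2 - 2 * r * cos θ + 1) ≠ 0 := by intro h; apply hD'; linarith
  have hs2 : sin θ ^ 2 = 1 - cos θ ^ 2 := by
    have := sin_sq_add_cos_sq θ; linarith
  have hcos2 : cos (2 * θ) = 2 * cos θ ^ 2 - 1 := Real.cos_two_mul θ
  have h1 : 1 - z₁ ^ 2 - z₂ ^ 2 + 2 * z₁ =
      2 * (r ^ 2 - 2 * r * cos θ - 1) / (1 + r ^ 2 - 2 * r * cos θ) := by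
    subst hz₁ hz₂
    simp only [div_pow, mul_pow, hs2]
    field_simp [show 1 + r ^ 2 - r * 2 * cos θ ≠ 0 by intro h; apply hD'; linarith]
    ring
  have h2 : (1 + z₁ ^ 2 - z₂ ^ 2) ^ 2 + (2 * z₁ * z₂) ^ 2 =
      4 * (r ^ 4 + 2 * r ^ 2 * cos (2 * θ) + 1) / (r ^ 2 - 2 * r * cos θ + 1) ^ 2 := by
    subst hz₁ hz₂
    rw [hcos2]
    simp only [div_pow, mul_pow, hs2]
    field_simp [show 1 + r ^ 2 - r * 2 * cos θ ≠ 0 by intro h; apply hD'; linarith, show r * (r - 2 * cos θ) + 1 ≠ 0 by intro h; apply hD''; linarith]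
    ring
  refine ⟨h1, h2, ?_⟩
  rw [h1, h2]
  have hX : (0:ℝ) ≤ (r ^ 2 - 1) ^ 2 + 4 * r ^ 2 * cos θ ^ 2 := by positivity
  have hkey : 4 * (r ^ 4 + 2 * r ^ 2 * cos (2 * θ) + 1) / (r ^ 2 - 2 * r * cos θ + 1) ^ 2 =
      (2 / (1 + r ^ 2 - 2 * r * cos θ)) ^ 2 * ((r ^ 2 - 1) ^ 2 + 4 * r ^ 2 * cos θ ^ 2) := by
    rw [hcos2]; field_simp; ring
  rw [hkey, Real.sqrt_mul (by positivity), Real.sqrt_sq (by positivity)]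
  have hab : 2 * (r ^ 2 - 2 * r * cos θ - 1) / (1 + r ^ 2 - 2 * r * cos θ) /
      (2 / (1 + r ^ 2 - 2 * r * cos θ)) = r ^ 2 - 2 * r * cos θ - 1 := by
    field_simp
  rw [div_mul_eq_div_div, hab]
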